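/- For the Gaussian envelope f(t) = exp(−(t/T)²), the maximizer of ω ↦ ω·exp(−T²(ω − ω_A)²/4) over ω > 0 is exactly ω_E = (ω_A + sqrt(ω_A² + 8/T²))/2, and hence ω_E/ω_A = (1 + sqrt(1 + 4(πN)^{−2}))/2 with N = ω_A T/(π√2). -/

import Mathlib

open Real Set

/-- For the Gaussian envelope, the maximizer of `ω ↦ ω·exp(−T²(ω − ω_A)²/4)` over `ω > 0`
is exactly `ω_E = (ω_A + √(ω_A² + 8/T²))/2`, and
`ω_E/ω_A = (1 + √(1 + 4(πN)⁻²))/2` with `N = ω_A T/(π√2)`. -/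
theorem gaussian_central_frequency_maximizer
    (T ωA : ℝ) (hT : 0 < T) (hωA : 0 < ωA)
    (F : ℝ → ℝ) (hF : ∀ ω, F ω = ω * Real.exp (-(T ^ 2 * (ω - ωA) ^ 2 / 4)))
    (ωE N : ℝ)
    (hωE : ωE = (ωA + Real.sqrt (ωA ^ 2 + 8 / T ^ 2)) / 2)
    (hN : N = ωA * T / (Real.pi * Real.sqrt 2)) :
    (∀ ω ∈ Ioi (0 : ℝ), ω ≠ ωE → F ω < F ωE) ∧
    ωE / ωA = (1 + Real.sqrt (1 + 4 / (Real.pi * N) ^ 2)) / 2 := by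
  have hT2 : (0:ℝ) < T ^ 2 := by positivity
  set s := Real.sqrt (ωA ^ 2 + 8 / T ^ 2) with hs
  have hsnn : (0:ℝ) ≤ ωA ^ 2 + 8 / T ^ 2 := by positivity
  have hs2 : s ^ 2 = ωA ^ 2 + 8 / T ^ 2 := Real.sq_sqrt hsnn
  have hsnonneg : 0 ≤ s := Real.sqrt_nonneg _
  have h8 : (0:ℝ) < 8 / T ^ 2 := by positivity
  have hs_gt : ωA < s := by nlinarith
  have hωEpos : 0 < ωE := by rw [hωE]; linarith
  have hkey : T ^ 2 * ωE * (ωE - ωA) = 2 := by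
    rw [hωE]
    have hT0 : T ^ 2 ≠ 0 := ne_of_gt hT2
    have hs2' : T ^ 2 * s ^ 2 = T ^ 2 * ωA ^ 2 + 8 := by
      rw [hs2]; field_simp
    field_simp
    linear_combination hs2'
  constructor
  · intro ω hω hne
    have hω0 : 0 < ω := hω
    set x := T ^ 2 / 4 * ((ω - ωE) * (ω + ωE - 2 * ωA)) with hx
    have hexp : 1 + x ≤ Real.exp x := by linarith [Real.add_one_le_exp x]
    have hne' : ω - ωE ≠ 0 := sub_ne_zero.mpr hne
    have hsqpos : 0 < (ω - ωE) ^ 2 := by positivity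
    have hid : ωE * (1 + x) - ω = T ^ 2 / 4 * ωE * (ω - ωE) ^ 2 := by
      rw [hx]; linear_combination ((ω - ωE) / 2) * hkey
    have hlt : ω < ωE * Real.exp x := by
      nlinarith [mul_le_mul_of_nonneg_left hexp (le_of_lt hωEpos)]
    calc F ω = ω * Real.exp (-(T ^ 2 * (ω - ωA) ^ 2 / 4)) := hF ω
      _ < ωE * Real.exp x * Real.exp (-(T ^ 2 * (ω - ωA) ^ 2 / 4)) :=
          mul_lt_mul_of_pos_right hlt (Real.exp_pos _)
      _ = ωE * Real.exp (x + -(T ^ 2 * (ω - ωA) ^ 2 / 4)) := by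
          rw [mul_assoc, ← Real.exp_add]
      _ = F ωE := by
          rw [hF]
          congr 2
          rw [hx]; ring
  · have hπ : Real.pi ≠ 0 := Real.pi_ne_zero
    have h2 : Real.sqrt 2 ^ 2 = 2 := Real.sq_sqrt (by norm_num)
    have h2ne : Real.sqrt 2 ≠ 0 := by positivity
    have harg : 1 + 4 / (Real.pi * N) ^ 2 = (ωA ^ 2 + 8 / T ^ 2) / ωA ^ 2 := by
      rw [hN]
      field_simp
      linear_combination 4 * h2
    rw [harg, Real.sqrt_div hsnn, Real.sqrt_sq hωA.le, hωE, ← hs]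
    field_simp
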